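/- For real numbers a, b, c, d with A = [[a,b],[c,d]] invertible, ‖A⁻¹‖₂⁻¹ = |(√((a+d)² + (c−b)²) − √((a−d)² + (b+c)²))/2|. -/

import Mathlib

set_option maxHeartbeats 1000000


noncomputable def opNorm (A : Matrix (Fin 2) (Fin 2) ℝ) : ℝ :=
  ‖Matrix.toEuclideanCLM (𝕜 := ℝ) (n := Fin 2) A‖

noncomputable def conorm (A : Matrix (Fin 2) (Fin 2) ℝ) : ℝ :=
  Real.sign A.det * (opNorm A⁻¹)⁻¹

noncomputable def arcosh (x : ℝ) : ℝ := Real.log (x + Real.sqrt (x ^ 2 - 1))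

noncomputable def AC (x : ℝ) : ℝ :=
  if x < 1 then Real.arccos x / Real.sqrt (1 - x ^ 2)
  else if x = 1 then 1
  else arcosh x / Real.sqrt (x ^ 2 - 1)

noncomputable def AS (x : ℝ) : ℝ :=
  if x = 1 then Real.sqrt (1 / 3) else Real.sqrt ((AC x ^ 2 - 1) / (1 - x ^ 2))

noncomputable def AT (x : ℝ) : ℝ := (AC x - 1) / AS x

noncomputable def PDcenter (A : Matrix (Fin 2) (Fin 2) ℝ) : ℂ :=
  (((A 0 0 + A 1 1) / 2 : ℝ) : ℂ) + ((|A 1 0 - A 0 1| / 2 : ℝ) : ℂ) * Complex.I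

noncomputable def PDradius (A : Matrix (Fin 2) (Fin 2) ℝ) : ℝ :=
  Real.sqrt (((A 0 0 - A 1 1) / 2) ^ 2 + ((A 0 1 + A 1 0) / 2) ^ 2)

noncomputable def PD (A : Matrix (Fin 2) (Fin 2) ℝ) : Set ℂ :=
  Metric.closedBall (PDcenter A) (PDradius A)

def LogAble (A : Matrix (Fin 2) (Fin 2) ℝ) : Prop :=
  ∀ z ∈ spectrum ℂ (A.map (fun x => (x : ℂ))), ¬(z.im = 0 ∧ z.re ≤ 0)

def IsPrincipalLog (A L : Matrix (Fin 2) (Fin 2) ℝ) : Prop :=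
  NormedSpace.exp L = A ∧
    ∀ z ∈ spectrum ℂ (L.map (fun x => (x : ℂ))), z.im ∈ Set.Ioo (-Real.pi) Real.pi



lemma aux_norm_apply (a b c d : ℝ) (x : EuclideanSpace ℝ (Fin 2)) :
    ‖Matrix.toEuclideanCLM (𝕜 := ℝ) (n := Fin 2) !![a, b; c, d] x‖
      = Real.sqrt ((a * x 0 + b * x 1)^2 + (c * x 0 + d * x 1)^2) := by
  have h := Matrix.ofLp_toEuclideanCLM (𝕜 := ℝ) !![a, b; c, d] x
  rw [EuclideanSpace.norm_eq]
  have h0 := congrFun h 0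
  have h1 := congrFun h 1
  rw [Fin.sum_univ_two, h0, h1]
  simp [Matrix.toLin'_apply, Matrix.mulVec, dotProduct, Fin.sum_univ_two,
    Real.norm_eq_abs, sq_abs]

lemma aux_norm_euclid (x : EuclideanSpace ℝ (Fin 2)) :
    ‖x‖ = Real.sqrt (x 0 ^ 2 + x 1 ^ 2) := by
  rw [EuclideanSpace.norm_eq, Fin.sum_univ_two]
  simp [Real.norm_eq_abs, sq_abs]

lemma aux_opNorm_le (a b c d σ : ℝ) (hσ0 : 0 ≤ σ)
    (hq : ∀ x0 x1 : ℝ, (a*x0+b*x1)^2 + (c*x0+d*x1)^2 ≤ σ^2*(x0^2+x1^2)) :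
    opNorm !![a, b; c, d] ≤ σ := by
  apply ContinuousLinearMap.opNorm_le_bound _ hσ0
  intro x
  rw [aux_norm_apply, aux_norm_euclid,
    show σ * Real.sqrt (x 0 ^ 2 + x 1 ^ 2) = Real.sqrt (σ^2 * (x 0 ^ 2 + x 1 ^ 2)) by
      rw [Real.sqrt_mul (by positivity), Real.sqrt_sq hσ0]]
  exact Real.sqrt_le_sqrt (hq (x 0) (x 1))

lemma aux_le_opNorm (a b c d σ : ℝ) (hσ0 : 0 ≤ σ) (x0 x1 : ℝ) (hx : x0^2 + x1^2 ≠ 0)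
    (hval : (a*x0+b*x1)^2 + (c*x0+d*x1)^2 = σ^2 * (x0^2+x1^2)) :
    σ ≤ opNorm !![a, b; c, d] := by
  set x : EuclideanSpace ℝ (Fin 2) := (WithLp.equiv 2 (Fin 2 → ℝ)).symm ![x0, x1] with hxdef
  have hx0 : x 0 = x0 := rfl
  have hx1 : x 1 = x1 := rfl
  have hnx : ‖x‖ = Real.sqrt (x0^2 + x1^2) := by rw [aux_norm_euclid, hx0, hx1]
  have hnxpos : 0 < ‖x‖ := by
    rw [hnx]; exact Real.sqrt_pos.mpr (lt_of_le_of_ne (by positivity) (Ne.symm hx))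
  have hTx : ‖Matrix.toEuclideanCLM (𝕜 := ℝ) (n := Fin 2) !![a, b; c, d] x‖ = σ * ‖x‖ := by
    rw [aux_norm_apply, hx0, hx1, hnx,
      show σ * Real.sqrt (x0^2 + x1^2) = Real.sqrt (σ^2 * (x0^2 + x1^2)) by
        rw [Real.sqrt_mul (by positivity), Real.sqrt_sq hσ0]]
    rw [hval]
  have h := ContinuousLinearMap.le_opNorm
    (Matrix.toEuclideanCLM (𝕜 := ℝ) (n := Fin 2) !![a, b; c, d]) x
  rw [hTx] at h
  exact le_of_mul_le_mul_right h hnxpos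

lemma aux_opNorm_eq (a b c d : ℝ) :
    opNorm !![a, b; c, d] =
      (Real.sqrt ((a + d) ^ 2 + (c - b) ^ 2) + Real.sqrt ((a - d) ^ 2 + (b + c) ^ 2)) / 2 := by
  set p := Real.sqrt ((a + d) ^ 2 + (c - b) ^ 2) with hpdef
  set q := Real.sqrt ((a - d) ^ 2 + (b + c) ^ 2) with hqdef
  have hp0 : 0 ≤ p := Real.sqrt_nonneg _
  have hq0 : 0 ≤ q := Real.sqrt_nonneg _
  have hp2 : p ^ 2 = (a + d) ^ 2 + (c - b) ^ 2 := Real.sq_sqrt (by positivity)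
  have hq2 : q ^ 2 = (a - d) ^ 2 + (b + c) ^ 2 := Real.sq_sqrt (by positivity)
  set σ : ℝ := (p + q) / 2 with hσdef
  have hσ0 : 0 ≤ σ := by positivity
  have hpq0 : 0 ≤ p * q := by positivity
  have hpq2 : (p * q) ^ 2 = (a^2 + c^2 - b^2 - d^2)^2 + 4 * (a*b + c*d)^2 := by
    rw [mul_pow, hp2, hq2]; ring
  have hpqge : a^2 + c^2 - b^2 - d^2 ≤ p * q := by nlinarith [sq_nonneg (a*b + c*d)]
  have hpqge' : b^2 + d^2 - a^2 - c^2 ≤ p * q := by nlinarith [sq_nonneg (a*b + c*d)]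
  have hσ2 : σ ^ 2 = (a^2+b^2+c^2+d^2)/2 + (p*q)/2 := by
    rw [hσdef]; linear_combination hp2/4 + hq2/4
  set α : ℝ := σ ^ 2 - (a^2 + c^2) with hαdef
  set γ : ℝ := σ ^ 2 - (b^2 + d^2) with hγdef
  have hα0 : 0 ≤ α := by rw [hαdef, hσ2]; linarith
  have hγ0 : 0 ≤ γ := by rw [hγdef, hσ2]; linarith
  have hαγ : α * γ = (a*b + c*d)^2 := by
    have e1 : α = (b^2+d^2-a^2-c^2)/2 + (p*q)/2 := by rw [hαdef, hσ2]; ring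
    have e2 : γ = (a^2+c^2-b^2-d^2)/2 + (p*q)/2 := by rw [hγdef, hσ2]; ring
    rw [e1, e2]; linear_combination hpq2 / 4
  apply le_antisymm
  · apply aux_opNorm_le a b c d σ hσ0
    intro x0 x1
    have hform : 0 ≤ α * x0^2 - 2*(a*b+c*d)*x0*x1 + γ * x1^2 := by
      rcases eq_or_lt_of_le hα0 with h0 | h0
      · have hb : a*b + c*d = 0 := by
          have hsq : (a*b+c*d)^2 = 0 := by rw [← hαγ, ← h0, zero_mul]
          exact pow_eq_zero_iff two_ne_zero |>.mp hsq
        rw [hb, ← h0]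
        have hr : (0:ℝ) * x0^2 - 2*0*x0*x1 + γ*x1^2 = γ*x1^2 := by ring
        rw [hr]; exact mul_nonneg hγ0 (sq_nonneg x1)
      · have hid : α * (α * x0^2 - 2*(a*b+c*d)*x0*x1 + γ * x1^2)
            = (α * x0 - (a*b+c*d) * x1)^2 + (α*γ - (a*b+c*d)^2) * x1^2 := by ring
        have hmul : 0 ≤ α * (α * x0^2 - 2*(a*b+c*d)*x0*x1 + γ * x1^2) := by
          rw [hid, hαγ, sub_self, zero_mul, add_zero]; positivity
        exact nonneg_of_mul_nonneg_right hmul h0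
    have hgoal : (a*x0+b*x1)^2 + (c*x0+d*x1)^2
        = σ^2*(x0^2+x1^2) - (α * x0^2 - 2*(a*b+c*d)*x0*x1 + γ * x1^2) := by
      rw [hαdef, hγdef]; ring
    linarith [hgoal.le, hform]
  · by_cases hv : a*b + c*d = 0 ∧ α = 0
    · obtain ⟨hb, ha⟩ := hv
      apply aux_le_opNorm a b c d σ hσ0 1 0 (by norm_num)
      have : a^2 + c^2 = σ^2 := by rw [hαdef] at ha; linarith
      linear_combination this
    · apply aux_le_opNorm a b c d σ hσ0 (a*b+c*d) α
      · intro hz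
        have h1 : (a*b+c*d)^2 = 0 := le_antisymm (by linarith [sq_nonneg α]) (sq_nonneg _)
        have h2 : α^2 = 0 := le_antisymm (by linarith [sq_nonneg (a*b+c*d)]) (sq_nonneg _)
        exact hv ⟨pow_eq_zero_iff two_ne_zero |>.mp h1, pow_eq_zero_iff two_ne_zero |>.mp h2⟩
      · have e1 : a^2 + c^2 = σ^2 - α := by rw [hαdef]; ring
        have e2 : b^2 + d^2 = σ^2 - γ := by rw [hγdef]; ring
        have expand : (a*(a*b+c*d)+b*α)^2 + (c*(a*b+c*d)+d*α)^2
            = (a^2+c^2)*(a*b+c*d)^2 + 2*(a*b+c*d)^2*α + (b^2+d^2)*α^2 := by ring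
        rw [expand, e1, e2]
        linear_combination (-α) * hαγ

theorem stmt1 (a b c d : ℝ) (h : IsUnit (!![a, b; c, d])) :
    (opNorm (!![a, b; c, d])⁻¹)⁻¹ =
      |(Real.sqrt ((a + d) ^ 2 + (c - b) ^ 2) - Real.sqrt ((a - d) ^ 2 + (b + c) ^ 2)) / 2| := by
  have hdet : (!![a, b; c, d]).det ≠ 0 :=
    isUnit_iff_ne_zero.mp ((Matrix.isUnit_iff_isUnit_det _).mp h)
  rw [Matrix.det_fin_two_of] at hdet
  set Δ : ℝ := a * d - b * c with hΔdef
  have hΔ0 : Δ ≠ 0 := hdet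
  have hΔabs : 0 < |Δ| := abs_pos.mpr hΔ0
  have hinv : (!![a, b; c, d])⁻¹ = !![d/Δ, -b/Δ; -c/Δ, a/Δ] := by
    rw [Matrix.inv_def, Matrix.adjugate_fin_two_of, Matrix.det_fin_two_of, Ring.inverse_eq_inv]
    ext i j
    fin_cases i <;> fin_cases j <;>
      simp [Matrix.smul_apply, div_eq_inv_mul, hΔdef] <;> ring
  rw [hinv, aux_opNorm_eq]
  set p := Real.sqrt ((a + d) ^ 2 + (c - b) ^ 2) with hpdef
  set q := Real.sqrt ((a - d) ^ 2 + (b + c) ^ 2) with hqdef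
  have hp0 : 0 ≤ p := Real.sqrt_nonneg _
  have hq0 : 0 ≤ q := Real.sqrt_nonneg _
  have hp2 : p ^ 2 = (a + d) ^ 2 + (c - b) ^ 2 := Real.sq_sqrt (by positivity)
  have hq2 : q ^ 2 = (a - d) ^ 2 + (b + c) ^ 2 := Real.sq_sqrt (by positivity)
  have s1 : Real.sqrt ((d/Δ + a/Δ) ^ 2 + (-c/Δ - -b/Δ) ^ 2) = p / |Δ| := by
    rw [show (d/Δ + a/Δ) ^ 2 + (-c/Δ - -b/Δ) ^ 2 = (p / |Δ|) ^ 2 by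
      rw [div_pow, hp2, sq_abs]; field_simp; ring]
    exact Real.sqrt_sq (by positivity)
  have s2 : Real.sqrt ((d/Δ - a/Δ) ^ 2 + (-b/Δ + -c/Δ) ^ 2) = q / |Δ| := by
    rw [show (d/Δ - a/Δ) ^ 2 + (-b/Δ + -c/Δ) ^ 2 = (q / |Δ|) ^ 2 by
      rw [div_pow, hq2, sq_abs]; field_simp; ring]
    exact Real.sqrt_sq (by positivity)
  rw [s1, s2]
  have hdiff : p ^ 2 - q ^ 2 = 4 * Δ := by rw [hp2, hq2, hΔdef]; ring
  have hsum : 0 < p + q := by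
    rcases lt_or_eq_of_le (by positivity : (0:ℝ) ≤ p + q) with hlt | heq
    · exact hlt
    · exfalso
      have hp' : p = 0 := by linarith
      have hq' : q = 0 := by linarith
      apply hΔ0
      have : p ^ 2 - q ^ 2 = 0 := by rw [hp', hq']; ring
      linarith [hdiff]
  have key : |p - q| * (p + q) = 4 * |Δ| :=
    calc |p - q| * (p + q) = |p - q| * |p + q| := by rw [abs_of_pos hsum]
      _ = |(p - q) * (p + q)| := (abs_mul _ _).symm
      _ = |p ^ 2 - q ^ 2| := by ring_nf
      _ = |4 * Δ| := by rw [hdiff]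
      _ = 4 * |Δ| := by rw [abs_mul]; norm_num
  rw [← add_div, abs_div, div_div, inv_div]
  have h2 : |(2:ℝ)| = 2 := by norm_num
  rw [h2]
  rw [div_eq_div_iff hsum.ne' (two_ne_zero)]
  linarith [key]
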